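/- arXiv:2007.13198 — 4 statements merged into one kernel-verified Lean document; each statement's English description precedes it below -/
import Mathlib

section
/- Let (P, ≤, *, 1) be a strongly sectionally pseudocomplemented poset and Θ a congruence on P. Then the class [1]Θ is a filter of P, and for all x, y ∈ P, (x, y) ∈ Θ if and only if x*y ∈ [1]Θ and y*x ∈ [1]Θ; i.e. Φ([1]Θ) = Θ. In particular, every congruence on P is determined by its 1-class. -/
/-- `star` makes the poset `P` sectionally pseudocomplemented: for all `a b`,
`star a b` is the greatest element `c` of `P` with `L(U(a,b), c) = L(b)`,
where `L(U(a,b), c)` is the set of common lower bounds of `U(a,b) ∪ {c}` and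
`U(a,b)` is the set of common upper bounds of `a` and `b`. -/
def IsSPPoset {P : Type*} [PartialOrder P] (star : P → P → P) : Prop :=
  ∀ a b : P,
    (∀ x : P, ((∀ u : P, a ≤ u → b ≤ u → x ≤ u) ∧ x ≤ star a b) ↔ x ≤ b) ∧
    ∀ c : P, (∀ x : P, ((∀ u : P, a ≤ u → b ≤ u → x ≤ u) ∧ x ≤ c) ↔ x ≤ b) →
      c ≤ star a b

/-- A strongly sectionally pseudocomplemented poset: sectionally pseudocomplemented,
with greatest element `one`, satisfying `x ≤ (x*y)*y`. -/
def IsStronglySPPoset {P : Type*} [PartialOrder P] (star : P → P → P) (one : P) : Prop :=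
  IsSPPoset star ∧ (∀ x : P, x ≤ one) ∧ ∀ x y : P, x ≤ star (star x y) y

open Classical in
/-- The minimum of two (comparable) elements of a poset. -/
noncomputable def pmin {P : Type*} [PartialOrder P] (a c : P) : P :=
  if a ≤ c then a else c

/-- A binary relation on a poset is min-stable if it is closed under taking minima of
componentwise comparable pairs. -/
def MinStable {P : Type*} [PartialOrder P] (ρ : P → P → Prop) : Prop :=
  ∀ a b c d : P, ρ a b → ρ c d → (a ≤ c ∨ c ≤ a) → (b ≤ d ∨ d ≤ b) →
    ρ (pmin a c) (pmin b d)

/-- A congruence on a sectionally pseudocomplemented poset: a min-stable equivalence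
relation compatible with `star`. -/
def IsSPPCong {P : Type*} [PartialOrder P] (star : P → P → P) (Θ : P → P → Prop) : Prop :=
  Equivalence Θ ∧ MinStable Θ ∧
    ∀ a b c d : P, Θ a b → Θ c d → Θ (star a c) (star b d)

/-- A filter of a sectionally pseudocomplemented poset with greatest element `one`. -/
def IsSPPFilter {P : Type*} [PartialOrder P] (star : P → P → P) (one : P) (F : Set P) :
    Prop :=
  one ∈ F ∧
  (∀ x y z : P, star x y ∈ F → star y x ∈ F →
    star (star x z) (star y z) ∈ F ∧ star (star z x) (star z y) ∈ F) ∧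
  (∀ x y z v : P, star x y ∈ F → star y x ∈ F → star z v ∈ F → star v z ∈ F →
    (x ≤ z ∨ z ≤ x) → (y ≤ v ∨ v ≤ y) → star (pmin x z) (pmin y v) ∈ F)

/-- `Φ(M)`: the relation of all pairs `(x, y)` with `star x y ∈ M` and `star y x ∈ M`. -/
def PhiRel {P : Type*} (star : P → P → P) (M : Set P) : P → P → Prop :=
  fun x y => star x y ∈ M ∧ star y x ∈ M

/-- The congruence class of `one` under `Θ`. -/
def oneClass {P : Type*} (Θ : P → P → Prop) (one : P) : Set P := {x : P | Θ x one}

theorem stmt_15 {P : Type*} [PartialOrder P] (star : P → P → P) (one : P)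
    (h : IsStronglySPPoset star one)
    (Θ : P → P → Prop) (hΘ : IsSPPCong star Θ) :
    IsSPPFilter star one (oneClass Θ one) ∧
    ∀ x y : P, Θ x y ↔ (star x y ∈ oneClass Θ one ∧ star y x ∈ oneClass Θ one) := by
  obtain ⟨hsp, htop, hstrong⟩ := h
  obtain ⟨heq, hmin, hcomp⟩ := hΘ
  have sxx : ∀ a : P, star a a = one := by
    intro a
    refine le_antisymm (htop _) ?_
    exact (hsp a a).2 one (fun x => ⟨fun ⟨hu, _⟩ => hu a le_rfl le_rfl,
      fun hx => ⟨fun u _ h2 => hx.trans h2, htop x⟩⟩)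
  have s1b : ∀ b : P, star one b = b := by
    intro b
    have h1 := (hsp one b).1
    refine le_antisymm ?_ ?_
    · exact (h1 (star one b)).1 ⟨fun u hu _ => (htop _).trans hu, le_rfl⟩
    · exact ((h1 b).2 le_rfl).2
  have pminl : ∀ a b : P, a ≤ b → pmin a b = a := by
    intro a b hab; simp [pmin, hab]
  have pminr : ∀ a b : P, b ≤ a → pmin a b = b := by
    intro a b hba
    unfold pmin
    split
    · exact le_antisymm ‹a ≤ b› hba
    · rfl
  have fwd : ∀ x y : P, Θ x y → Θ (star x y) one := by
    intro x y hxy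
    have := hcomp x y y y hxy (heq.refl y)
    rwa [sxx y] at this
  have main : ∀ x y : P, Θ x y ↔ (Θ (star x y) one ∧ Θ (star y x) one) := by
    intro x y
    constructor
    · intro hxy
      exact ⟨fwd x y hxy, fwd y x (heq.symm hxy)⟩
    · rintro ⟨h1, h2⟩
      have ha : Θ (star (star x y) y) y := by
        have := hcomp (star x y) one y y h1 (heq.refl y)
        rwa [s1b y] at this
      have hb : Θ (star (star y x) x) x := by
        have := hcomp (star y x) one x x h2 (heq.refl x)
        rwa [s1b x] at this
      have hm := hmin (star (star x y) y) y x (star (star y x) x) ha (heq.symm hb)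
        (Or.inr (hstrong x y)) (Or.inl (hstrong y x))
      rwa [pminr _ _ (hstrong x y), pminl _ _ (hstrong y x)] at hm
  constructor
  · refine ⟨heq.refl one, ?_, ?_⟩
    · intro x y z hx hy
      have hxy : Θ x y := (main x y).mpr ⟨hx, hy⟩
      exact ⟨fwd _ _ (hcomp x y z z hxy (heq.refl z)),
        fwd _ _ (hcomp z z x y (heq.refl z) hxy)⟩
    · intro x y z v h1 h2 h3 h4 hc1 hc2
      exact fwd _ _ (hmin x y z v ((main x y).mpr ⟨h1, h2⟩)
        ((main z v).mpr ⟨h3, h4⟩) hc1 hc2)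
  · exact main
end

section
/- Let (P, ≤, *, 1) be a strongly sectionally pseudocomplemented poset and Θ a congruence on P. Then every congruence class of Θ is a convex subset of (P, ≤): if b and d lie in the same class and b ≤ c ≤ d, then c lies in that class. Moreover, every class of Θ is up-directed: any two elements of a class have a common upper bound within that class. -/
theorem stmt_17 {P : Type*} [PartialOrder P] (star : P → P → P) (one : P)
    (h : IsStronglySPPoset star one)
    (Θ : P → P → Prop) (hΘ : IsSPPCong star Θ) :
    (∀ a b c d : P, Θ a b → Θ a d → b ≤ c → c ≤ d → Θ a c) ∧
    (∀ a b c : P, Θ a b → Θ a c → ∃ e : P, Θ a e ∧ b ≤ e ∧ c ≤ e) := by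
  obtain ⟨hsp, htop, hstrong⟩ := h
  obtain ⟨heq, hmin, hcomp⟩ := hΘ
  have hb_le : ∀ a b : P, b ≤ star a b := fun a b =>
    (((hsp a b).1 b).mpr le_rfl).2
  have hone : ∀ a b : P, a ≤ b → star a b = one := by
    intro a b hab
    refine le_antisymm (htop _) ?_
    refine (hsp a b).2 one ?_
    intro x
    constructor
    · rintro ⟨hu, -⟩
      exact hu b hab le_rfl
    · intro hx
      exact ⟨fun u _ hbu => hx.trans hbu, htop x⟩
  have h1y : ∀ y : P, star one y = y := by
    intro y
    refine le_antisymm ?_ (hb_le one y)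
    exact ((hsp one y).1 (star one y)).mp
      ⟨fun u h1u _ => (htop _).trans h1u, le_rfl⟩
  have hpmin1 : ∀ x y : P, x ≤ y → pmin x y = x := by
    intro x y hxy
    unfold pmin
    rw [if_pos hxy]
  have hpmin2 : ∀ x y : P, y ≤ x → pmin x y = y := by
    intro x y hyx
    unfold pmin
    split
    · exact le_antisymm (by assumption) hyx
    · rfl
  constructor
  · intro a b c d hab had hbc hcd
    have hbd : Θ d b := heq.trans (heq.symm had) hab
    have h1 : Θ (star d c) (star b c) := hcomp d b c c hbd (heq.refl c)
    rw [hone b c hbc] at h1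
    have h2 : Θ (star (star d c) c) (star one c) :=
      hcomp _ _ _ _ h1 (heq.refl c)
    rw [h1y] at h2
    have hd_le : d ≤ star (star d c) c := hstrong d c
    have h3 := hmin (star (star d c) c) c d d h2 (heq.refl d)
      (Or.inr hd_le) (Or.inl hcd)
    rw [hpmin2 _ _ hd_le, hpmin1 _ _ hcd] at h3
    exact heq.trans had h3
  · intro a b c hab hac
    refine ⟨star (star b c) c, ?_, hstrong b c, hb_le _ _⟩
    have hbc : Θ b c := heq.trans (heq.symm hab) hac
    have h1 : Θ (star b c) (star c c) := hcomp b c c c hbc (heq.refl c)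
    rw [hone c c le_rfl] at h1
    have h2 : Θ (star (star b c) c) (star one c) :=
      hcomp _ _ _ _ h1 (heq.refl c)
    rw [h1y] at h2
    exact heq.trans hac (heq.symm h2)
end

section
/- Let (P, ≤, *, 1) be a strongly sectionally pseudocomplemented poset, Θ a congruence on P, and define the relation ≤' on the quotient P/Θ by [a]Θ ≤' [b]Θ if and only if a*b ∈ [1]Θ. Then: (i) ≤' is well defined and a ≤ b implies [a]Θ ≤' [b]Θ; (ii) [a]Θ ≤' [b]Θ holds if and only if there exists c ∈ [b]Θ with a ≤ c; (iii) ≤' is a partial order on P/Θ (reflexive, antisymmetric and transitive). -/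
theorem stmt_18 {P : Type*} [PartialOrder P] (star : P → P → P) (one : P)
    (h : IsStronglySPPoset star one)
    (Θ : P → P → Prop) (hΘ : IsSPPCong star Θ)
    (le' : P → P → Prop) (hle' : ∀ a b : P, le' a b ↔ Θ (star a b) one) :
    -- (i) well-definedness on Θ-classes and compatibility with ≤
    (∀ a a' b b' : P, Θ a a' → Θ b b' → (le' a b ↔ le' a' b')) ∧
    (∀ a b : P, a ≤ b → le' a b) ∧
    -- (ii) characterization of ≤'
    (∀ a b : P, le' a b ↔ ∃ c : P, Θ b c ∧ a ≤ c) ∧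
    -- (iii) ≤' is a partial order on the quotient P/Θ
    (∀ a : P, le' a a) ∧
    (∀ a b : P, le' a b → le' b a → Θ a b) ∧
    (∀ a b c : P, le' a b → le' b c → le' a c) := by
  obtain ⟨hsp, hone, hstr⟩ := h
  obtain ⟨heq, hmin, hcong⟩ := hΘ
  have L1 : ∀ a b : P, b ≤ star a b := fun a b => (((hsp a b).1 b).mpr le_rfl).2
  have L2 : ∀ a b : P, a ≤ b → star a b = one := by
    intro a b hab
    refine le_antisymm (hone _) ((hsp a b).2 one ?_)
    intro x
    constructor
    · rintro ⟨hu, -⟩; exact hu b hab le_rfl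
    · intro hx; exact ⟨fun u _ hbu => hx.trans hbu, hone x⟩
  have L4 : ∀ b : P, star one b = b := by
    intro b
    refine le_antisymm ?_ (L1 one b)
    refine ((hsp one b).1 (star one b)).mp ⟨?_, le_rfl⟩
    intro u h1u _
    have : u = one := le_antisymm (hone u) h1u
    rw [this]; exact hone _
  have char : ∀ a b : P, le' a b ↔ ∃ c : P, Θ b c ∧ a ≤ c := by
    intro a b
    rw [hle']
    constructor
    · intro hθ
      refine ⟨star (star a b) b, ?_, hstr a b⟩
      have h2 := hcong _ one b b hθ (heq.refl b)
      rw [L4] at h2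
      exact heq.symm h2
    · rintro ⟨c, hbc, hac⟩
      have h2 := hcong a a b c (heq.refl a) hbc
      rw [L2 a c hac] at h2
      exact h2
  have hcompat : ∀ a b : P, a ≤ b → le' a b := by
    intro a b hab
    rw [hle', L2 a b hab]
    exact heq.refl one
  refine ⟨?_, hcompat, char, ?_, ?_, ?_⟩
  · intro a a' b b' haa hbb
    have h2 := hcong a a' b b' haa hbb
    rw [hle', hle']
    exact ⟨fun hx => heq.trans (heq.symm h2) hx, fun hx => heq.trans h2 hx⟩
  · intro a; exact hcompat a a le_rfl
  · intro a b hab hba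
    rw [char] at hab hba
    obtain ⟨c, hbc, hac⟩ := hab
    obtain ⟨d, had, hbd⟩ := hba
    have h2 := hmin a d c b had (heq.symm hbc) (Or.inl hac) (Or.inr hbd)
    have e1 : pmin a c = a := by simp [pmin, hac]
    have e2 : pmin d b = b := by
      by_cases hdb : d ≤ b
      · have : d = b := le_antisymm hdb hbd
        simp [pmin, hdb, this]
      · simp [pmin, hdb]
    rw [e1, e2] at h2
    exact h2
  · intro a b c hab hbc
    rw [char] at hab hbc ⊢
    obtain ⟨c1, hbc1, hac1⟩ := hab
    obtain ⟨c2, hcc2, hbc2⟩ := hbc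
    refine ⟨star (star c1 c2) c2, ?_, hac1.trans (hstr c1 c2)⟩
    have h2 : Θ (star c1 c2) (star b c2) :=
      hcong c1 b c2 c2 (heq.symm hbc1) (heq.refl c2)
    have h3 := hcong _ _ c2 c2 h2 (heq.refl c2)
    rw [L2 b c2 hbc2, L4] at h3
    exact heq.trans hcc2 (heq.symm h3)
end

section
/- Let (P, ≤, *, 1) be a strongly sectionally pseudocomplemented poset, Θ a congruence on P, n ≥ 1 and a₁, …, aₙ ∈ P, and let ≤' be the partial order on P/Θ given by [a]Θ ≤' [b]Θ iff a*b ∈ [1]Θ. Then the set of common upper bounds of [a₁]Θ, …, [aₙ]Θ in (P/Θ, ≤') equals {[x]Θ : x is a common upper bound of a₁, …, aₙ in (P, ≤)}. -/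
lemma aux_star_eq_one {P : Type*} [PartialOrder P] (star : P → P → P) (one : P)
    (h : IsStronglySPPoset star one) {a b : P} (hab : a ≤ b) :
    star a b = one := by
  obtain ⟨hsp, htop, -⟩ := h
  refine le_antisymm (htop _) ?_
  apply (hsp a b).2
  intro x
  constructor
  · rintro ⟨hu, -⟩; exact hu b hab le_rfl
  · intro hx; exact ⟨fun u _ hb => hx.trans hb, htop x⟩

lemma aux_le_star {P : Type*} [PartialOrder P] (star : P → P → P) (one : P)
    (h : IsStronglySPPoset star one) (a b : P) : b ≤ star a b :=
  (((h.1 a b).1 b).2 le_rfl).2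

lemma aux_star_one {P : Type*} [PartialOrder P] (star : P → P → P) (one : P)
    (h : IsStronglySPPoset star one) (b : P) : star one b = b := by
  refine le_antisymm ?_ (aux_le_star star one h one b)
  refine ((h.1 one b).1 (star one b)).1 ⟨?_, le_rfl⟩
  intro u hu _
  have : u = one := le_antisymm (h.2.1 u) hu
  rw [this]; exact h.2.1 _

lemma aux_main {P : Type*} [PartialOrder P] (star : P → P → P) (one : P)
    (h : IsStronglySPPoset star one)
    (Θ : P → P → Prop) (hΘ : IsSPPCong star Θ) :
    ∀ n (a : Fin n → P) (b : P), (∀ i, Θ (star (a i) b) one) →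
      ∃ x, Θ b x ∧ ∀ i, a i ≤ x := by
  obtain ⟨heq, -, hcong⟩ := hΘ
  intro n
  induction n with
  | zero => intro a b _; exact ⟨b, heq.refl b, fun i => i.elim0⟩
  | succ n ih =>
    intro a b hb
    obtain ⟨x, hbx, hx⟩ := ih (fun i => a i.succ) b (fun i => hb i.succ)
    have h1 : Θ (star (a 0) x) one :=
      heq.trans (hcong (a 0) (a 0) x b (heq.refl _) (heq.symm hbx)) (hb 0)
    refine ⟨star (star (a 0) x) x, ?_, ?_⟩
    · have h2 := hcong (star (a 0) x) one x x h1 (heq.refl x)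
      rw [aux_star_one star one h] at h2
      exact heq.trans hbx (heq.symm h2)
    · intro i
      refine Fin.cases ?_ ?_ i
      · exact h.2.2 (a 0) x
      · intro j; exact (hx j).trans (aux_le_star star one h (star (a 0) x) x)

theorem stmt_19 {P : Type*} [PartialOrder P] (star : P → P → P) (one : P)
    (h : IsStronglySPPoset star one)
    (Θ : P → P → Prop) (hΘ : IsSPPCong star Θ)
    (le' : P → P → Prop) (hle' : ∀ a b : P, le' a b ↔ Θ (star a b) one)
    (n : ℕ) (hn : 1 ≤ n) (a : Fin n → P) :
    ∀ b : P, (∀ i : Fin n, le' (a i) b) ↔ ∃ x : P, Θ b x ∧ ∀ i : Fin n, a i ≤ x := by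
  intro b
  constructor
  · intro hb
    exact aux_main star one h Θ hΘ n a b (fun i => (hle' (a i) b).1 (hb i))
  · rintro ⟨x, hbx, hx⟩ i
    rw [hle']
    have h1 := hΘ.2.2 (a i) (a i) b x (hΘ.1.refl _) hbx
    rwa [aux_star_eq_one star one h (hx i)] at h1
end
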